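/- For every prime power q ≥ 3, the graph Λ_{5,q} has girth at least 10; that is, Λ_{5,q} contains no cycle of length 8 (and no odd cycles, being bipartite). -/

import Mathlib

/-- Vertices of one side of the graph `Λ(k,q)`: tuples of `k+1` elements of `F`,
modelled as functions `ℕ → F` vanishing above index `k`. -/
abbrev PVec (F : Type*) [Zero F] (k : ℕ) : Type _ := {f : ℕ → F // ∀ i, k < i → f i = 0}

/-- Adjacency condition between a left vertex `[l]` (with `l 1 = l 2`) and a right
vertex `⟨r⟩` (with `r 1 = 0`) in `Λ(k,q)`: for `2 ≤ i ≤ k`,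
`l i + r i = r 0 * l (i-2)` if `i ≡ 2, 3 (mod 4)` and
`l i + r i = l 0 * r (i-2)` if `i ≡ 0, 1 (mod 4)`. -/
def lamAdjLR {F : Type*} [Field F] (k : ℕ) (l r : ℕ → F) : Prop :=
  l 1 = l 2 ∧ r 1 = 0 ∧ ∀ i, 2 ≤ i → i ≤ k →
    ((i % 4 = 2 ∨ i % 4 = 3) → l i + r i = r 0 * l (i - 2)) ∧
    ((i % 4 = 0 ∨ i % 4 = 1) → l i + r i = l 0 * r (i - 2))

/-- The bipartite graph `Λ(k,q)` (the graph `Λ_{k,q}` of the paper, isomorphic to `D(k,q)`). -/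
def LambdaGraph (F : Type*) [Field F] (k : ℕ) : SimpleGraph (PVec F k ⊕ PVec F k) where
  Adj x y := match x, y with
    | Sum.inl l, Sum.inr r => lamAdjLR k l.1 r.1
    | Sum.inr r, Sum.inl l => lamAdjLR k l.1 r.1
    | _, _ => False
  symm := ⟨by rintro (l | r) (l' | r') h <;> exact h⟩
  loopless := ⟨by rintro (l | r) h <;> exact h⟩

section Aux

variable {F : Type*} [Field F]

/-- Extract the four coordinate equations from an adjacency in `Λ(5,q)`. -/
lemma lam5_eqs {l r : ℕ → F} (h : lamAdjLR 5 l r) :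
    l 1 = l 2 ∧ r 1 = 0 ∧ (l 2 + r 2 = r 0 * l 0) ∧ (l 3 + r 3 = r 0 * l 2) ∧
      (l 4 + r 4 = l 0 * r 2) ∧ (l 5 + r 5 = l 0 * r 3) := by
  obtain ⟨h1, h2, h⟩ := h
  refine ⟨h1, h2, ?_, ?_, ?_, ?_⟩
  · exact (h 2 (by norm_num) (by norm_num)).1 (by norm_num)
  · have h3 := (h 3 (by norm_num) (by norm_num)).1 (by norm_num)
    rwa [h1] at h3
  · exact (h 4 (by norm_num) (by norm_num)).2 (by norm_num)
  · exact (h 5 (by norm_num) (by norm_num)).2 (by norm_num)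

/-- Two left vertices adjacent to a common right vertex and with the same 0-th
coordinate are equal. -/
lemma lam5_left_eq {l l' r : ℕ → F} (h : lamAdjLR 5 l r) (h' : lamAdjLR 5 l' r)
    (h0 : l 0 = l' 0) (hv : ∀ i, 5 < i → l i = 0) (hv' : ∀ i, 5 < i → l' i = 0) :
    l = l' := by
  obtain ⟨e1, _, e3, e4, e5, e6⟩ := lam5_eqs h
  obtain ⟨f1, _, f3, f4, f5, f6⟩ := lam5_eqs h'
  have k2 : l 2 = l' 2 := by linear_combination e3 - f3 + r 0 * h0
  have k1 : l 1 = l' 1 := by rw [e1, f1]; exact k2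
  have k3 : l 3 = l' 3 := by linear_combination e4 - f4 + r 0 * k2
  have k4 : l 4 = l' 4 := by linear_combination e5 - f5 + r 2 * h0
  have k5 : l 5 = l' 5 := by linear_combination e6 - f6 + r 3 * h0
  funext i
  rcases i with _ | _ | _ | _ | _ | _ | i
  exacts [h0, k1, k2, k3, k4, k5, by rw [hv _ (by omega), hv' _ (by omega)]]

/-- Two right vertices adjacent to a common left vertex and with the same 0-th
coordinate are equal. -/
lemma lam5_right_eq {l r r' : ℕ → F} (h : lamAdjLR 5 l r) (h' : lamAdjLR 5 l r')
    (h0 : r 0 = r' 0) (hv : ∀ i, 5 < i → r i = 0) (hv' : ∀ i, 5 < i → r' i = 0) :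
    r = r' := by
  obtain ⟨_, e2, e3, e4, e5, e6⟩ := lam5_eqs h
  obtain ⟨_, f2, f3, f4, f5, f6⟩ := lam5_eqs h'
  have k1 : r 1 = r' 1 := by rw [e2, f2]
  have k2 : r 2 = r' 2 := by linear_combination e3 - f3 + l 0 * h0
  have k3 : r 3 = r' 3 := by linear_combination e4 - f4 + l 2 * h0
  have k4 : r 4 = r' 4 := by linear_combination e5 - f5 + l 0 * k2
  have k5 : r 5 = r' 5 := by linear_combination e6 - f6 + l 0 * k3
  funext i
  rcases i with _ | _ | _ | _ | _ | _ | i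
  exacts [h0, k1, k2, k3, k4, k5, by rw [hv _ (by omega), hv' _ (by omega)]]

/-- No (combinatorial) 4-cycle in `Λ(5,q)`. -/
lemma lam5_no4 {l1 l2 r1 r2 : ℕ → F}
    (h11 : lamAdjLR 5 l1 r1) (h21 : lamAdjLR 5 l2 r1)
    (h22 : lamAdjLR 5 l2 r2) (h12 : lamAdjLR 5 l1 r2)
    (na : l1 0 ≠ l2 0) (nb : r1 0 ≠ r2 0) : False := by
  obtain ⟨_, _, h11_2, _, _, _⟩ := lam5_eqs h11
  obtain ⟨_, _, h21_2, _, _, _⟩ := lam5_eqs h21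
  obtain ⟨_, _, h22_2, _, _, _⟩ := lam5_eqs h22
  obtain ⟨_, _, h12_2, _, _, _⟩ := lam5_eqs h12
  have key : (l1 0 - l2 0) * (r1 0 - r2 0) = 0 := by
    linear_combination h21_2 - h11_2 + h12_2 - h22_2
  exact mul_ne_zero (sub_ne_zero.mpr na) (sub_ne_zero.mpr nb) key

/-- No (combinatorial) 6-cycle in `Λ(5,q)`. -/
lemma lam5_no6 {l1 l2 l3 r1 r2 r3 : ℕ → F}
    (h11 : lamAdjLR 5 l1 r1) (h21 : lamAdjLR 5 l2 r1)
    (h22 : lamAdjLR 5 l2 r2) (h32 : lamAdjLR 5 l3 r2)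
    (h33 : lamAdjLR 5 l3 r3) (h13 : lamAdjLR 5 l1 r3)
    (na12 : l1 0 ≠ l2 0) (nb12 : r1 0 ≠ r2 0) (nb23 : r2 0 ≠ r3 0)
    (nb31 : r3 0 ≠ r1 0) : False := by
  obtain ⟨_, _, h11_2, h11_3, _, _⟩ := lam5_eqs h11
  obtain ⟨_, _, h21_2, h21_3, _, _⟩ := lam5_eqs h21
  obtain ⟨_, _, h22_2, h22_3, _, _⟩ := lam5_eqs h22
  obtain ⟨_, _, h32_2, h32_3, _, _⟩ := lam5_eqs h32
  obtain ⟨_, _, h33_2, h33_3, _, _⟩ := lam5_eqs h33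
  obtain ⟨_, _, h13_2, h13_3, _, _⟩ := lam5_eqs h13
  have key : (l1 0 - l2 0) * (r1 0 - r2 0) * ((r2 0 - r3 0) * (r3 0 - r1 0)) = 0 := by
    linear_combination
      ((r1 0)*(r2 0) - (r2 0)*(r2 0) - (r1 0)*(r3 0) + (r3 0)*(r3 0)) * h11_2 +
      ((r2 0) - (r3 0)) * h11_3 +
      (-(r1 0)*(r2 0) + (r2 0)*(r2 0) + (r1 0)*(r3 0) - (r3 0)*(r3 0)) * h21_2 +
      (-(r2 0) + (r3 0)) * h21_3 +
      (-(r2 0)*(r3 0) + (r3 0)*(r3 0)) * h22_2 +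
      ((r2 0) - (r3 0)) * h22_3 +
      ((r2 0)*(r3 0) - (r3 0)*(r3 0)) * h32_2 +
      (-(r2 0) + (r3 0)) * h32_3 +
      (-(r2 0)*(r2 0) + (r2 0)*(r3 0)) * h33_2 +
      ((r2 0) - (r3 0)) * h33_3 +
      ((r2 0)*(r2 0) - (r2 0)*(r3 0)) * h13_2 +
      (-(r2 0) + (r3 0)) * h13_3
  exact mul_ne_zero (mul_ne_zero (sub_ne_zero.mpr na12) (sub_ne_zero.mpr nb12))
    (mul_ne_zero (sub_ne_zero.mpr nb23) (sub_ne_zero.mpr nb31)) key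

/-- No (combinatorial) 8-cycle in `Λ(5,q)`. -/
lemma lam5_no8 {l1 l2 l3 l4 r1 r2 r3 r4 : ℕ → F}
    (h11 : lamAdjLR 5 l1 r1) (h21 : lamAdjLR 5 l2 r1)
    (h22 : lamAdjLR 5 l2 r2) (h32 : lamAdjLR 5 l3 r2)
    (h33 : lamAdjLR 5 l3 r3) (h43 : lamAdjLR 5 l4 r3)
    (h44 : lamAdjLR 5 l4 r4) (h14 : lamAdjLR 5 l1 r4)
    (na12 : l1 0 ≠ l2 0) (na23 : l2 0 ≠ l3 0)
    (nb12 : r1 0 ≠ r2 0) (nb23 : r2 0 ≠ r3 0) : False := by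
  obtain ⟨_, _, h11_2, h11_3, h11_4, h11_5⟩ := lam5_eqs h11
  obtain ⟨_, _, h21_2, h21_3, h21_4, h21_5⟩ := lam5_eqs h21
  obtain ⟨_, _, h22_2, h22_3, h22_4, h22_5⟩ := lam5_eqs h22
  obtain ⟨_, _, h32_2, h32_3, h32_4, h32_5⟩ := lam5_eqs h32
  obtain ⟨_, _, h33_2, h33_3, h33_4, h33_5⟩ := lam5_eqs h33
  obtain ⟨_, _, h43_2, h43_3, h43_4, h43_5⟩ := lam5_eqs h43
  obtain ⟨_, _, h44_2, h44_3, h44_4, h44_5⟩ := lam5_eqs h44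
  obtain ⟨_, _, h14_2, h14_3, h14_4, h14_5⟩ := lam5_eqs h14
  have key : (l2 0 - l3 0) * (r2 0 - r3 0) * ((l2 0 - l1 0) * (r2 0 - r1 0)) = 0 := by
    linear_combination
      (-(l4 0)*(r3 0) - (l1 0)*(r4 0) + (l4 0)*(r4 0) + (l1 2)) * h11_2 +
      ((r3 0)) * h11_4 +
      (-1) * h11_5 +
      ((l1 0)*(r3 0) - (l2 0)*(r3 0) + (l4 0)*(r3 0) + (l1 0)*(r4 0) - (l4 0)*(r4 0) - (l1 2)) * h21_2 +
      (-(l1 0) + (l2 0)) * h21_3 +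
      (-(r3 0)) * h21_4 +
      (1) * h21_5 +
      (-(l1 0)*(r1 0) + (l2 0)*(r1 0) + (l1 0)*(r2 0) - (l2 0)*(r2 0) - (l1 0)*(r3 0) + (l2 0)*(r3 0) - (l4 0)*(r3 0) - (l1 0)*(r4 0) + (l4 0)*(r4 0) + (l1 2)) * h22_2 +
      ((l1 0) - (l2 0)) * h22_3 +
      ((r3 0)) * h22_4 +
      (-1) * h22_5 +
      ((l1 0)*(r1 0) - (l2 0)*(r1 0) - (l1 0)*(r2 0) + (l2 0)*(r2 0) + (l1 0)*(r3 0) - (l3 0)*(r3 0) + (l4 0)*(r3 0) + (l1 0)*(r4 0) - (l4 0)*(r4 0) - (l1 2)) * h32_2 +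
      (-(l1 0) + (l3 0)) * h32_3 +
      (-(r3 0)) * h32_4 +
      (1) * h32_5 +
      (-(l1 0)*(r1 0) + (l2 0)*(r1 0) - (l2 0)*(r2 0) + (l3 0)*(r2 0) - (l4 0)*(r3 0) - (l1 0)*(r4 0) + (l4 0)*(r4 0) + (l1 2)) * h33_2 +
      ((l1 0) - (l3 0)) * h33_3 +
      ((r3 0)) * h33_4 +
      (-1) * h33_5 +
      ((l1 0)*(r1 0) - (l2 0)*(r1 0) + (l2 0)*(r2 0) - (l3 0)*(r2 0) + (l3 0)*(r3 0) + (l1 0)*(r4 0) - (l4 0)*(r4 0) - (l1 2)) * h43_2 +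
      (-(l1 0) + (l4 0)) * h43_3 +
      (-(r3 0)) * h43_4 +
      (1) * h43_5 +
      (-(l1 0)*(r1 0) + (l2 0)*(r1 0) - (l2 0)*(r2 0) + (l3 0)*(r2 0) - (l1 0)*(r3 0) - (l3 0)*(r3 0) + (l4 0)*(r3 0) + (l1 2)) * h44_2 +
      ((l1 0) - (l4 0)) * h44_3 +
      ((r3 0)) * h44_4 +
      (-1) * h44_5 +
      ((l1 0)*(r1 0) - (l2 0)*(r1 0) + (l2 0)*(r2 0) - (l3 0)*(r2 0) + (l3 0)*(r3 0) - (l1 2)) * h14_2 +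
      (-(r3 0)) * h14_4 +
      (1) * h14_5
  exact mul_ne_zero (mul_ne_zero (sub_ne_zero.mpr na23) (sub_ne_zero.mpr nb23))
    (mul_ne_zero (sub_ne_zero.mpr (Ne.symm na12)) (sub_ne_zero.mpr (Ne.symm nb12))) key

end Aux

section Walks

open SimpleGraph Walk Sum

variable {V : Type*} {G : SimpleGraph V}

/-- On a walk with no duplicate vertices, `getVert` is injective. -/
lemma getVert_inj_of_nodup :
    ∀ {u v : V} (p : G.Walk u v), p.support.Nodup →
      ∀ i j, i ≤ p.length → j ≤ p.length → p.getVert i = p.getVert j → i = j := by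
  intro u v p
  induction p with
  | nil =>
    intro _ i j hi hj _
    simp only [Walk.length_nil, Nat.le_zero] at hi hj
    omega
  | @cons u u' v h p ih =>
    intro hnd i j hi hj heq
    rw [Walk.support_cons, List.nodup_cons] at hnd
    obtain ⟨hu, hnd⟩ := hnd
    rw [Walk.length_cons] at hi hj
    match i, j with
    | 0, 0 => rfl
    | 0, j+1 =>
      exfalso
      apply hu
      rw [Walk.mem_support_iff_exists_getVert]
      refine ⟨j, ?_, by omega⟩
      simpa [Walk.getVert_cons_succ] using heq.symm
    | i+1, 0 =>
      exfalso
      apply hu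
      rw [Walk.mem_support_iff_exists_getVert]
      refine ⟨i, ?_, by omega⟩
      simpa [Walk.getVert_cons_succ] using heq
    | i+1, j+1 =>
      have := ih hnd i j (by omega) (by omega)
        (by simpa [Walk.getVert_cons_succ] using heq)
      omega

variable {F : Type*} [Field F]

lemma lam5_adj_inl {l : PVec F 5} {y : PVec F 5 ⊕ PVec F 5}
    (h : (LambdaGraph F 5).Adj (inl l) y) :
    ∃ r : PVec F 5, y = inr r ∧ lamAdjLR 5 l.1 r.1 := by
  rcases y with l' | r
  · exact (h : False).elim
  · exact ⟨r, rfl, h⟩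

lemma lam5_adj_inr {r : PVec F 5} {y : PVec F 5 ⊕ PVec F 5}
    (h : (LambdaGraph F 5).Adj (inr r) y) :
    ∃ l : PVec F 5, y = inl l ∧ lamAdjLR 5 l.1 r.1 := by
  rcases y with l | r'
  · exact ⟨l, rfl, h⟩
  · exact (h : False).elim

lemma lam5_adj_isLeft {x y : PVec F 5 ⊕ PVec F 5}
    (h : (LambdaGraph F 5).Adj x y) : x.isLeft = !y.isLeft := by
  rcases x with l | r <;> rcases y with l' | r'
  · exact (h : False).elim
  · rfl
  · rfl
  · exact (h : False).elim

/-- The parity of a walk's length in the bipartite graph `Λ(5,q)`. -/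
lemma lam5_walk_parity {x y : PVec F 5 ⊕ PVec F 5} (p : (LambdaGraph F 5).Walk x y) :
    Even p.length ↔ (x.isLeft = y.isLeft) := by
  induction p with
  | nil => simp
  | @cons u u' v h p ih =>
    rw [Walk.length_cons, Nat.even_add_one, ih]
    have := lam5_adj_isLeft h
    rw [this]
    cases u'.isLeft <;> cases v.isLeft <;> simp

/-- Vertex-level versions of the uniqueness lemmas. -/
lemma lam5_left_vertex_eq {x y r : PVec F 5} (h : lamAdjLR 5 x.1 r.1)
    (h' : lamAdjLR 5 y.1 r.1) (h0 : x.1 0 = y.1 0) : x = y :=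
  Subtype.ext (lam5_left_eq h h' h0 x.2 y.2)

lemma lam5_right_vertex_eq {l x y : PVec F 5} (h : lamAdjLR 5 l.1 x.1)
    (h' : lamAdjLR 5 l.1 y.1) (h0 : x.1 0 = y.1 0) : x = y :=
  Subtype.ext (lam5_right_eq h h' h0 x.2 y.2)

end Walks

section Cycles

open SimpleGraph Walk Sum

variable {F : Type*} [Field F]

lemma lam5_no_cycle4 {v : PVec F 5 ⊕ PVec F 5} (w : (LambdaGraph F 5).Walk v v)
    (hc : w.IsCycle) (hl : w.length = 4) : False := by
  cases w with
  | nil => simp at hl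
  | @cons _ v0 _ hadj p =>
    rw [Walk.length_cons] at hl
    have hl3 : p.length = 3 := by omega
    have hnd : p.support.Nodup := by
      have := hc.support_nodup
      rwa [Walk.support_cons, List.tail_cons] at this
    have hV : ∀ i j, i ≤ 3 → j ≤ 3 → p.getVert i = p.getVert j → i = j := by
      intro i j hi hj
      exact getVert_inj_of_nodup p hnd i j (by omega) (by omega)
    have hu0 : p.getVert 0 = v0 := Walk.getVert_zero p
    have hu3 : p.getVert 3 = v := by have := Walk.getVert_length p; rwa [hl3] at this
    have hadj0 : (LambdaGraph F 5).Adj v (p.getVert 0) := by rwa [hu0]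
    have hadj1 : (LambdaGraph F 5).Adj (p.getVert 0) (p.getVert 1) :=
      p.adj_getVert_succ (by omega)
    have hadj2 : (LambdaGraph F 5).Adj (p.getVert 1) (p.getVert 2) :=
      p.adj_getVert_succ (by omega)
    have hadj3 : (LambdaGraph F 5).Adj (p.getVert 2) (p.getVert 3) :=
      p.adj_getVert_succ (by omega)
    have hne02 : p.getVert 0 ≠ p.getVert 2 := fun h => by have := hV 0 2 (by omega) (by omega) h; omega
    have hne13 : p.getVert 1 ≠ p.getVert 3 := fun h => by have := hV 1 3 (by omega) (by omega) h; omega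
    rcases v with L1 | R1
    · -- v = inl L1 : cycle L1 R1 L2 R2
      obtain ⟨R1, h0, e11⟩ := lam5_adj_inl hadj0
      rw [h0] at hadj1
      obtain ⟨L2, h1, e21⟩ := lam5_adj_inr hadj1
      rw [h1] at hadj2
      obtain ⟨R2, h2, e22⟩ := lam5_adj_inl hadj2
      rw [h2, hu3] at hadj3
      obtain ⟨L1', h3, e12⟩ := lam5_adj_inr hadj3
      have hL1 : L1' = L1 := by injection h3 with h'; exact h'.symm
      rw [hL1] at e12
      refine lam5_no4 e11 e21 e22 e12 ?_ ?_
      · intro h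
        exact hne13 (by rw [h1, hu3]; exact congrArg inl (lam5_left_vertex_eq e21 e11 h.symm))
      · intro h
        exact hne02 (by rw [h0, h2]; exact congrArg inr (lam5_right_vertex_eq e21 e22 h))
    · -- v = inr R1 : cycle R1 L1 R2 L2
      obtain ⟨L1, h0, e11⟩ := lam5_adj_inr hadj0
      rw [h0] at hadj1
      obtain ⟨R2, h1, e12⟩ := lam5_adj_inl hadj1
      rw [h1] at hadj2
      obtain ⟨L2, h2, e22⟩ := lam5_adj_inr hadj2
      rw [h2, hu3] at hadj3
      have e21 : lamAdjLR 5 L2.1 R1.1 := hadj3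
      refine lam5_no4 e11 e21 e22 e12 ?_ ?_
      · intro h
        exact hne02 (by rw [h0, h2]; exact congrArg inl (lam5_left_vertex_eq e11 e21 h))
      · intro h
        exact hne13 (by rw [h1, hu3]; exact congrArg inr (lam5_right_vertex_eq e12 e11 h.symm))

lemma lam5_no_cycle6 {v : PVec F 5 ⊕ PVec F 5} (w : (LambdaGraph F 5).Walk v v)
    (hc : w.IsCycle) (hl : w.length = 6) : False := by
  cases w with
  | nil => simp at hl
  | @cons _ v0 _ hadj p =>
    rw [Walk.length_cons] at hl
    have hl5 : p.length = 5 := by omega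
    have hnd : p.support.Nodup := by
      have := hc.support_nodup
      rwa [Walk.support_cons, List.tail_cons] at this
    have hV : ∀ i j, i ≤ 5 → j ≤ 5 → p.getVert i = p.getVert j → i = j := by
      intro i j hi hj
      exact getVert_inj_of_nodup p hnd i j (by omega) (by omega)
    have hu0 : p.getVert 0 = v0 := Walk.getVert_zero p
    have hu5 : p.getVert 5 = v := by have := Walk.getVert_length p; rwa [hl5] at this
    have hadj0 : (LambdaGraph F 5).Adj v (p.getVert 0) := by rwa [hu0]
    have hadj1 : (LambdaGraph F 5).Adj (p.getVert 0) (p.getVert 1) :=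
      p.adj_getVert_succ (by omega)
    have hadj2 : (LambdaGraph F 5).Adj (p.getVert 1) (p.getVert 2) :=
      p.adj_getVert_succ (by omega)
    have hadj3 : (LambdaGraph F 5).Adj (p.getVert 2) (p.getVert 3) :=
      p.adj_getVert_succ (by omega)
    have hadj4 : (LambdaGraph F 5).Adj (p.getVert 3) (p.getVert 4) :=
      p.adj_getVert_succ (by omega)
    have hadj5 : (LambdaGraph F 5).Adj (p.getVert 4) (p.getVert 5) :=
      p.adj_getVert_succ (by omega)
    have hne : ∀ i j, i < j → j ≤ 5 → p.getVert i ≠ p.getVert j := by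
      intro i j hij hj h
      have := hV i j (by omega) (by omega) h
      omega
    rcases v with L1 | R1
    · -- cycle L1 R1 L2 R2 L3 R3
      obtain ⟨R1, h0, e11⟩ := lam5_adj_inl hadj0
      rw [h0] at hadj1
      obtain ⟨L2, h1, e21⟩ := lam5_adj_inr hadj1
      rw [h1] at hadj2
      obtain ⟨R2, h2, e22⟩ := lam5_adj_inl hadj2
      rw [h2] at hadj3
      obtain ⟨L3, h3, e32⟩ := lam5_adj_inr hadj3
      rw [h3] at hadj4
      obtain ⟨R3, h4, e33⟩ := lam5_adj_inl hadj4
      rw [h4, hu5] at hadj5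
      obtain ⟨L1', h5, e13⟩ := lam5_adj_inr hadj5
      have hL1 : L1' = L1 := by injection h5 with h'; exact h'.symm
      rw [hL1] at e13
      refine lam5_no6 e11 e21 e22 e32 e33 e13 ?_ ?_ ?_ ?_
      · intro h
        refine hne 1 5 (by omega) (by omega) ?_
        rw [h1, hu5]
        exact congrArg inl (lam5_left_vertex_eq e21 e11 h.symm)
      · intro h
        exact hne 0 2 (by omega) (by omega)
          (by rw [h0, h2]; exact congrArg inr (lam5_right_vertex_eq e21 e22 h))
      · intro h
        exact hne 2 4 (by omega) (by omega)
          (by rw [h2, h4]; exact congrArg inr (lam5_right_vertex_eq e32 e33 h))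
      · intro h
        exact hne 0 4 (by omega) (by omega)
          (by rw [h0, h4]; exact congrArg inr (lam5_right_vertex_eq e11 e13 h.symm))
    · -- cycle R1 L1 R2 L2 R3 L3 ; relabel rights (r2, r3, r1)
      obtain ⟨L1, h0, e11⟩ := lam5_adj_inr hadj0
      rw [h0] at hadj1
      obtain ⟨R2, h1, e12⟩ := lam5_adj_inl hadj1
      rw [h1] at hadj2
      obtain ⟨L2, h2, e22⟩ := lam5_adj_inr hadj2
      rw [h2] at hadj3
      obtain ⟨R3, h3, e23⟩ := lam5_adj_inl hadj3
      rw [h3] at hadj4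
      obtain ⟨L3, h4, e33⟩ := lam5_adj_inr hadj4
      rw [h4, hu5] at hadj5
      have e31 : lamAdjLR 5 L3.1 R1.1 := hadj5
      refine lam5_no6 e12 e22 e23 e33 e31 e11 ?_ ?_ ?_ ?_
      · intro h
        exact hne 0 2 (by omega) (by omega)
          (by rw [h0, h2]; exact congrArg inl (lam5_left_vertex_eq e12 e22 h))
      · intro h
        exact hne 1 3 (by omega) (by omega)
          (by rw [h1, h3]; exact congrArg inr (lam5_right_vertex_eq e22 e23 h))
      · intro h
        refine hne 3 5 (by omega) (by omega) ?_
        rw [h3, hu5]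
        exact congrArg inr (lam5_right_vertex_eq e33 e31 h)
      · intro h
        refine hne 1 5 (by omega) (by omega) ?_
        rw [h1, hu5]
        exact congrArg inr (lam5_right_vertex_eq e11 e12 h).symm

lemma lam5_no_cycle8 {v : PVec F 5 ⊕ PVec F 5} (w : (LambdaGraph F 5).Walk v v)
    (hc : w.IsCycle) (hl : w.length = 8) : False := by
  cases w with
  | nil => simp at hl
  | @cons _ v0 _ hadj p =>
    rw [Walk.length_cons] at hl
    have hl7 : p.length = 7 := by omega
    have hnd : p.support.Nodup := by
      have := hc.support_nodup
      rwa [Walk.support_cons, List.tail_cons] at this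
    have hV : ∀ i j, i ≤ 7 → j ≤ 7 → p.getVert i = p.getVert j → i = j := by
      intro i j hi hj
      exact getVert_inj_of_nodup p hnd i j (by omega) (by omega)
    have hu0 : p.getVert 0 = v0 := Walk.getVert_zero p
    have hu7 : p.getVert 7 = v := by have := Walk.getVert_length p; rwa [hl7] at this
    have hadj0 : (LambdaGraph F 5).Adj v (p.getVert 0) := by rwa [hu0]
    have hadj1 : (LambdaGraph F 5).Adj (p.getVert 0) (p.getVert 1) :=
      p.adj_getVert_succ (by omega)
    have hadj2 : (LambdaGraph F 5).Adj (p.getVert 1) (p.getVert 2) :=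
      p.adj_getVert_succ (by omega)
    have hadj3 : (LambdaGraph F 5).Adj (p.getVert 2) (p.getVert 3) :=
      p.adj_getVert_succ (by omega)
    have hadj4 : (LambdaGraph F 5).Adj (p.getVert 3) (p.getVert 4) :=
      p.adj_getVert_succ (by omega)
    have hadj5 : (LambdaGraph F 5).Adj (p.getVert 4) (p.getVert 5) :=
      p.adj_getVert_succ (by omega)
    have hadj6 : (LambdaGraph F 5).Adj (p.getVert 5) (p.getVert 6) :=
      p.adj_getVert_succ (by omega)
    have hadj7 : (LambdaGraph F 5).Adj (p.getVert 6) (p.getVert 7) :=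
      p.adj_getVert_succ (by omega)
    have hne : ∀ i j, i < j → j ≤ 7 → p.getVert i ≠ p.getVert j := by
      intro i j hij hj h
      have := hV i j (by omega) (by omega) h
      omega
    rcases v with L1 | R1
    · -- cycle L1 R1 L2 R2 L3 R3 L4 R4
      obtain ⟨R1, h0, e11⟩ := lam5_adj_inl hadj0
      rw [h0] at hadj1
      obtain ⟨L2, h1, e21⟩ := lam5_adj_inr hadj1
      rw [h1] at hadj2
      obtain ⟨R2, h2, e22⟩ := lam5_adj_inl hadj2
      rw [h2] at hadj3
      obtain ⟨L3, h3, e32⟩ := lam5_adj_inr hadj3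
      rw [h3] at hadj4
      obtain ⟨R3, h4, e33⟩ := lam5_adj_inl hadj4
      rw [h4] at hadj5
      obtain ⟨L4, h5, e43⟩ := lam5_adj_inr hadj5
      rw [h5] at hadj6
      obtain ⟨R4, h6, e44⟩ := lam5_adj_inl hadj6
      rw [h6, hu7] at hadj7
      obtain ⟨L1', h7, e14⟩ := lam5_adj_inr hadj7
      have hL1 : L1' = L1 := by injection h7 with h'; exact h'.symm
      rw [hL1] at e14
      refine lam5_no8 e11 e21 e22 e32 e33 e43 e44 e14 ?_ ?_ ?_ ?_
      · intro h
        refine hne 1 7 (by omega) (by omega) ?_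
        rw [h1, hu7]
        exact congrArg inl (lam5_left_vertex_eq e21 e11 h.symm)
      · intro h
        exact hne 1 3 (by omega) (by omega)
          (by rw [h1, h3]; exact congrArg inl (lam5_left_vertex_eq e22 e32 h))
      · intro h
        exact hne 0 2 (by omega) (by omega)
          (by rw [h0, h2]; exact congrArg inr (lam5_right_vertex_eq e21 e22 h))
      · intro h
        exact hne 2 4 (by omega) (by omega)
          (by rw [h2, h4]; exact congrArg inr (lam5_right_vertex_eq e32 e33 h))
    · -- cycle R1 L1 R2 L2 R3 L3 R4 L4 ; relabel rights (r2, r3, r4, r1)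
      obtain ⟨L1, h0, e11⟩ := lam5_adj_inr hadj0
      rw [h0] at hadj1
      obtain ⟨R2, h1, e12⟩ := lam5_adj_inl hadj1
      rw [h1] at hadj2
      obtain ⟨L2, h2, e22⟩ := lam5_adj_inr hadj2
      rw [h2] at hadj3
      obtain ⟨R3, h3, e23⟩ := lam5_adj_inl hadj3
      rw [h3] at hadj4
      obtain ⟨L3, h4, e33⟩ := lam5_adj_inr hadj4
      rw [h4] at hadj5
      obtain ⟨R4, h5, e34⟩ := lam5_adj_inl hadj5
      rw [h5] at hadj6
      obtain ⟨L4, h6, e44⟩ := lam5_adj_inr hadj6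
      rw [h6, hu7] at hadj7
      have e41 : lamAdjLR 5 L4.1 R1.1 := hadj7
      refine lam5_no8 e12 e22 e23 e33 e34 e44 e41 e11 ?_ ?_ ?_ ?_
      · intro h
        exact hne 0 2 (by omega) (by omega)
          (by rw [h0, h2]; exact congrArg inl (lam5_left_vertex_eq e12 e22 h))
      · intro h
        exact hne 2 4 (by omega) (by omega)
          (by rw [h2, h4]; exact congrArg inl (lam5_left_vertex_eq e23 e33 h))
      · intro h
        exact hne 1 3 (by omega) (by omega)
          (by rw [h1, h3]; exact congrArg inr (lam5_right_vertex_eq e22 e23 h))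
      · intro h
        exact hne 3 5 (by omega) (by omega)
          (by rw [h3, h5]; exact congrArg inr (lam5_right_vertex_eq e33 e34 h))

end Cycles

/-- For every prime power `q ≥ 3`, the girth of `Λ(5,q)` is at least 10. -/
theorem lambda5_girth_ge_ten (q : ℕ) (hq : IsPrimePow q) (hq3 : 3 ≤ q)
    (F : Type*) [Field F] [Fintype F] (hF : Fintype.card F = q) :
    10 ≤ (LambdaGraph F 5).egirth := by
  rw [SimpleGraph.le_egirth]
  intro a w hw
  have h3 : 3 ≤ w.length := hw.three_le_length
  have heven : Even w.length := (lam5_walk_parity w).mpr rfl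
  by_contra hlt
  push_neg at hlt
  have hlt' : w.length < 10 := by exact_mod_cast hlt
  have h4 : w.length ≠ 4 := fun h => lam5_no_cycle4 w hw h
  have h6 : w.length ≠ 6 := fun h => lam5_no_cycle6 w hw h
  have h8 : w.length ≠ 8 := fun h => lam5_no_cycle8 w hw h
  rw [Nat.even_iff] at heven
  omega
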